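/- Disintegration identity for KL divergence of joint measures: let π, π̄ be probability measures on X × Y with π ≪ π̄, and let K_π̄(x, dy) be the conditional kernel of π̄ given the first coordinate, so π̄ = p_X π̄ ⊗ K_π̄. Then KL(π | π̄) = KL(p_X π | p_X π̄) + KL(π | p_X π ⊗ K_π̄), where p_X denotes the first marginal. -/

import Mathlib

open MeasureTheory ProbabilityTheory

/- The Kullback--Leibler divergence `KL(μ|ν) = ∫ log(dμ/dν) dμ` when `μ ≪ ν` (and the
log-likelihood ratio is integrable), `+∞` otherwise. -/
open Classical in
noncomputable def klDiv {α : Type*} [MeasurableSpace α] (μ ν : Measure α) : EReal :=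
  if μ ≪ ν ∧ Integrable (llr μ ν) μ then ((∫ x, llr μ ν x ∂μ : ℝ) : EReal) else ⊤

section Aux

variable {α : Type*} [MeasurableSpace α]

/-- The negative part of the log-likelihood ratio is always integrable. -/
lemma integrable_neg_part_llr {μ ν : Measure α} [IsFiniteMeasure μ] [IsFiniteMeasure ν]
    (hμν : μ ≪ ν) :
    Integrable (fun x ↦ max (- llr μ ν x) 0) μ := by
  refine Integrable.mono' (Measure.integrable_toReal_rnDeriv (μ := ν) (ν := μ)) ?_ ?_
  · exact ((measurable_llr _ _).neg.max measurable_const).aestronglyMeasurable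
  · filter_upwards [neg_llr hμν, exp_llr_of_ac' ν μ hμν] with x h1 h2
    have h1' : - llr μ ν x = llr ν μ x := h1
    rw [Real.norm_eq_abs, abs_of_nonneg (le_max_right _ _), h1', ← h2]
    have hle : llr ν μ x ≤ Real.exp (llr ν μ x) := by
      have := Real.add_one_le_exp (llr ν μ x); linarith
    exact max_le hle (Real.exp_pos _).le

lemma integrable_of_eq_add {f g h : α → ℝ} {μ : Measure α}
    (hfgh : f =ᵐ[μ] fun x ↦ g x + h x)
    (hgneg : Integrable (fun x ↦ max (- g x) 0) μ)
    (hhneg : Integrable (fun x ↦ max (- h x) 0) μ)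
    (hgm : AEStronglyMeasurable g μ)
    (hf : Integrable f μ) : Integrable g μ := by
  refine Integrable.mono' ((hf.abs.add hhneg).add hgneg) hgm ?_
  filter_upwards [hfgh] with x hx
  simp only [Pi.add_apply, Real.norm_eq_abs, hx]
  have h1 : max (- h x) 0 ≥ - h x := le_max_left _ _
  have h2 : max (- h x) 0 ≥ 0 := le_max_right _ _
  have h3 : max (- g x) 0 ≥ - g x := le_max_left _ _
  have h4 : max (- g x) 0 ≥ 0 := le_max_right _ _
  have h5 : f x ≤ |f x| := le_abs_self _
  have h6 : g x + h x ≤ |g x + h x| := le_abs_self _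
  have h7 : (0:ℝ) ≤ |g x + h x| := abs_nonneg _
  rcases abs_cases (g x) with ⟨he, _⟩ | ⟨he, _⟩ <;> rw [he] <;> linarith

lemma klDiv_ne_bot (μ ν : Measure α) : klDiv μ ν ≠ ⊥ := by
  rw [klDiv]
  split_ifs
  · exact EReal.coe_ne_bot _
  · simp

end Aux

section Main

variable {X Y : Type*} [MeasurableSpace X] [MeasurableSpace Y] [StandardBorelSpace Y]
    [Nonempty Y]

lemma withDensity_rnDeriv_fst_eq_compProd (p q : Measure (X × Y))
    [IsFiniteMeasure p] [IsFiniteMeasure q] (hfst : p.fst ≪ q.fst) :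
    q.withDensity (fun z ↦ p.fst.rnDeriv q.fst z.1) = p.fst ⊗ₘ q.condKernel := by
  have hg : Measurable (p.fst.rnDeriv q.fst) := Measure.measurable_rnDeriv _ _
  have hgm : Measurable fun z : X × Y ↦ p.fst.rnDeriv q.fst z.1 := hg.comp measurable_fst
  ext s hs
  rw [withDensity_apply _ hs, Measure.compProd_apply hs]
  calc ∫⁻ z in s, p.fst.rnDeriv q.fst z.1 ∂q
      = ∫⁻ z in s, p.fst.rnDeriv q.fst z.1 ∂(q.fst ⊗ₘ q.condKernel) := by
        rw [q.disintegrate q.condKernel]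
    _ = ∫⁻ z, s.indicator (fun z ↦ p.fst.rnDeriv q.fst z.1) z ∂(q.fst ⊗ₘ q.condKernel) :=
        (lintegral_indicator hs _).symm
    _ = ∫⁻ x, ∫⁻ y, s.indicator (fun z ↦ p.fst.rnDeriv q.fst z.1) (x, y)
          ∂(q.condKernel x) ∂q.fst := by
        rw [Measure.lintegral_compProd (hgm.indicator hs)]
    _ = ∫⁻ x, p.fst.rnDeriv q.fst x * q.condKernel x (Prod.mk x ⁻¹' s) ∂q.fst := by
        refine lintegral_congr fun x ↦ ?_
        have h1 : ∀ y, s.indicator (fun z ↦ p.fst.rnDeriv q.fst z.1) (x, y)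
            = p.fst.rnDeriv q.fst x * (Prod.mk x ⁻¹' s).indicator (1 : Y → ENNReal) y := by
          intro y
          by_cases hy : (x, y) ∈ s <;>
            simp [Set.indicator, hy]
        simp_rw [h1]
        rw [lintegral_const_mul _ (measurable_one.indicator (measurable_prodMk_left hs)),
          lintegral_indicator_one (measurable_prodMk_left hs)]
    _ = ∫⁻ x, q.condKernel x (Prod.mk x ⁻¹' s) ∂p.fst := by
        conv_rhs => rw [← Measure.withDensity_rnDeriv_eq p.fst q.fst hfst]
        rw [lintegral_withDensity_eq_lintegral_mul _ hg
            (Kernel.measurable_kernel_prodMk_left hs)]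
        rfl

lemma rnDeriv_compProd_condKernel (p q : Measure (X × Y))
    [IsFiniteMeasure p] [IsProbabilityMeasure q] (hfst : p.fst ≪ q.fst) :
    (p.fst ⊗ₘ q.condKernel).rnDeriv q =ᵐ[q] fun z ↦ p.fst.rnDeriv q.fst z.1 := by
  rw [← withDensity_rnDeriv_fst_eq_compProd p q hfst]
  exact Measure.rnDeriv_withDensity q ((Measure.measurable_rnDeriv _ _).comp measurable_fst)

lemma measure_rnDeriv_eq_zero' {α : Type*} [MeasurableSpace α] {μ ν : Measure α}
    [Measure.HaveLebesgueDecomposition μ ν] (hμν : μ ≪ ν) :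
    μ {x | μ.rnDeriv ν x = 0} = 0 := by
  have h := Measure.rnDeriv_pos hμν
  rw [ae_iff] at h
  refine measure_mono_null (fun x hx ↦ ?_) h
  simp only [Set.mem_setOf_eq] at hx ⊢
  simp [hx]

lemma absolutelyContinuous_compProd_condKernel (p q : Measure (X × Y))
    [IsFiniteMeasure p] [IsProbabilityMeasure q] (hpq : p ≪ q) :
    p ≪ p.fst ⊗ₘ q.condKernel := by
  have hfst : p.fst ≪ q.fst := hpq.map measurable_fst
  have hg : Measurable (p.fst.rnDeriv q.fst) := Measure.measurable_rnDeriv _ _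
  refine Measure.AbsolutelyContinuous.mk fun s hs hs0 ↦ ?_
  rw [← withDensity_rnDeriv_fst_eq_compProd p q hfst, withDensity_apply _ hs] at hs0
  set A : Set (X × Y) := {z | p.fst.rnDeriv q.fst z.1 = 0} with hA
  have hAmeas : MeasurableSet A := (hg.comp measurable_fst) (measurableSet_singleton 0)
  have h0 : ∀ᵐ z ∂q, z ∈ s → p.fst.rnDeriv q.fst z.1 = 0 :=
    (setLIntegral_eq_zero_iff hs (hg.comp measurable_fst)).mp hs0
  have hsA : q (s \ A) = 0 := by
    have h1 := ae_iff.mp h0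
    have h2 : s \ A = {z | ¬(z ∈ s → p.fst.rnDeriv q.fst z.1 = 0)} := by
      ext z; simp [hA, Classical.not_imp]
    rw [h2]; exact h1
  have hpsA : p (s \ A) = 0 := hpq hsA
  have hpA : p A = 0 := by
    have hA' : MeasurableSet {x | p.fst.rnDeriv q.fst x = 0} := hg (measurableSet_singleton 0)
    have h1 := measure_rnDeriv_eq_zero' hfst
    rw [Measure.fst_apply hA'] at h1
    exact h1
  have : p s ≤ p (s \ A) + p A := by
    refine le_trans (measure_mono ?_) (measure_union_le _ _)
    intro z hz
    by_cases hzA : z ∈ A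
    · exact Or.inr hzA
    · exact Or.inl ⟨hz, hzA⟩
  simp [hpsA, hpA] at this
  exact this

lemma llr_decomposition (p q : Measure (X × Y))
    [IsProbabilityMeasure p] [IsProbabilityMeasure q] (hpq : p ≪ q) :
    llr p q =ᵐ[p] fun z ↦ llr p (p.fst ⊗ₘ q.condKernel) z + llr p.fst q.fst z.1 := by
  have hfst : p.fst ≪ q.fst := hpq.map measurable_fst
  have hpμ : p ≪ p.fst ⊗ₘ q.condKernel := absolutelyContinuous_compProd_condKernel p q hpq
  have hμq : (p.fst ⊗ₘ q.condKernel) ≪ q := by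
    rw [← withDensity_rnDeriv_fst_eq_compProd p q hfst]
    exact withDensity_absolutelyContinuous _ _
  have h1 : ∀ᵐ z ∂p, p.rnDeriv (p.fst ⊗ₘ q.condKernel) z
      * (p.fst ⊗ₘ q.condKernel).rnDeriv q z = p.rnDeriv q z :=
    hpq.ae_le (Measure.rnDeriv_mul_rnDeriv hpμ)
  have h2 : ∀ᵐ z ∂p, (p.fst ⊗ₘ q.condKernel).rnDeriv q z = p.fst.rnDeriv q.fst z.1 :=
    hpq.ae_le (rnDeriv_compProd_condKernel p q hfst)
  have h3 : ∀ᵐ z ∂p, 0 < p.rnDeriv (p.fst ⊗ₘ q.condKernel) z := Measure.rnDeriv_pos hpμ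
  have h4 : ∀ᵐ z ∂p, p.rnDeriv (p.fst ⊗ₘ q.condKernel) z < ⊤ :=
    hpμ.ae_le (Measure.rnDeriv_lt_top p _)
  have h5 : ∀ᵐ z ∂p, 0 < p.fst.rnDeriv q.fst z.1 :=
    ae_of_ae_map measurable_fst.aemeasurable (Measure.rnDeriv_pos hfst)
  have h6 : ∀ᵐ z ∂p, p.fst.rnDeriv q.fst z.1 < ⊤ :=
    ae_of_ae_map measurable_fst.aemeasurable (hfst.ae_le (Measure.rnDeriv_lt_top p.fst q.fst))
  have h7 : ∀ᵐ z ∂p, 0 < p.rnDeriv q z := Measure.rnDeriv_pos hpq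
  have h8 : ∀ᵐ z ∂p, p.rnDeriv q z < ⊤ := hpq.ae_le (Measure.rnDeriv_lt_top p q)
  filter_upwards [h1, h2, h3, h4, h5, h6, h7, h8] with z e1 e2 e3 e4 e5 e6 e7 e8
  have hA : (p.rnDeriv (p.fst ⊗ₘ q.condKernel) z).toReal ≠ 0 :=
    (ENNReal.toReal_pos e3.ne' e4.ne).ne'
  have hB : ((p.fst.rnDeriv q.fst) z.1).toReal ≠ 0 :=
    (ENNReal.toReal_pos e5.ne' e6.ne).ne'
  rw [llr, llr, llr, ← e1, e2, ENNReal.toReal_mul, Real.log_mul hA hB]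

end Main

/-- Disintegration identity for the KL divergence of joint measures:
for probability measures `p, q` on `X × Y` with `p ≪ q`, writing `q = q.fst ⊗ₘ q.condKernel`,
one has `KL(p | q) = KL(p.fst | q.fst) + KL(p | p.fst ⊗ₘ q.condKernel)`. -/
theorem kl_disintegration
    {X Y : Type*} [MeasurableSpace X] [MeasurableSpace Y] [StandardBorelSpace Y]
    [Nonempty Y]
    (p q : Measure (X × Y)) [IsProbabilityMeasure p] [IsProbabilityMeasure q]
    (hpq : p ≪ q) :
    klDiv p q = klDiv p.fst q.fst + klDiv p (p.fst ⊗ₘ q.condKernel) := by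
  have hfst : p.fst ≪ q.fst := hpq.map measurable_fst
  have hpμ : p ≪ p.fst ⊗ₘ q.condKernel := absolutelyContinuous_compProd_condKernel p q hpq
  have hED := llr_decomposition p q hpq
  have hglm : AEStronglyMeasurable (fun z : X × Y ↦ llr p.fst q.fst z.1) p :=
    ((measurable_llr _ _).comp measurable_fst).aestronglyMeasurable
  have hmapiff : Integrable (llr p.fst q.fst) p.fst
      ↔ Integrable (fun z : X × Y ↦ llr p.fst q.fst z.1) p := by
    rw [show Integrable (fun z : X × Y ↦ llr p.fst q.fst z.1) p
        ↔ Integrable (llr p.fst q.fst ∘ Prod.fst) p from Iff.rfl,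
      ← integrable_map_measure (measurable_llr _ _).aestronglyMeasurable
        measurable_fst.aemeasurable]
    rfl
  -- negative parts
  have hneg1 : Integrable (fun z ↦ max (- llr p (p.fst ⊗ₘ q.condKernel) z) 0) p :=
    integrable_neg_part_llr hpμ
  have hneg2 : Integrable (fun z : X × Y ↦ max (- llr p.fst q.fst z.1) 0) p := by
    have h := integrable_neg_part_llr hfst
    have := (integrable_map_measure
      (((measurable_llr _ _).neg.max measurable_const).aestronglyMeasurable)
      (measurable_fst.aemeasurable (μ := p))).mp h
    exact this
  by_cases hint : Integrable (llr p q) p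
  · have hInt1 : Integrable (llr p (p.fst ⊗ₘ q.condKernel)) p :=
      integrable_of_eq_add hED hneg1 hneg2 (measurable_llr _ _).aestronglyMeasurable hint
    have hIntG : Integrable (fun z : X × Y ↦ llr p.fst q.fst z.1) p := by
      refine ((hint.sub hInt1).congr ?_)
      filter_upwards [hED] with z hz
      simp [hz]
    have hInt2 : Integrable (llr p.fst q.fst) p.fst := hmapiff.mpr hIntG
    rw [klDiv, klDiv, klDiv, if_pos ⟨hpq, hint⟩, if_pos ⟨hfst, hInt2⟩, if_pos ⟨hpμ, hInt1⟩,
      ← EReal.coe_add, EReal.coe_eq_coe_iff]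
    have hIeq : ∫ z, llr p q z ∂p
        = ∫ z, (llr p (p.fst ⊗ₘ q.condKernel) z + llr p.fst q.fst z.1) ∂p :=
      integral_congr_ae hED
    rw [hIeq, integral_add hInt1 hIntG, add_comm]
    congr 1
    exact (integral_map measurable_fst.aemeasurable
      (measurable_llr _ _).aestronglyMeasurable).symm
  · rw [klDiv, if_neg (fun h ↦ hint h.2)]
    by_cases h1 : Integrable (llr p (p.fst ⊗ₘ q.condKernel)) p
    · have h2 : ¬ Integrable (llr p.fst q.fst) p.fst := by
        intro h2
        exact hint ((h1.add (hmapiff.mp h2)).congr hED.symm)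
      rw [klDiv, if_neg (fun h ↦ h2 h.2), EReal.top_add_of_ne_bot (klDiv_ne_bot _ _)]
    · rw [show klDiv p (p.fst ⊗ₘ q.condKernel) = ⊤ by rw [klDiv]; exact if_neg fun h ↦ h1 h.2,
        EReal.add_top_of_ne_bot (klDiv_ne_bot _ _)]
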